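/- Let n ≥ 3 and 0 ≤ r < R < 1. Define μ(Str) = (1/ω_0)∫_r^R (1-t²)^{(n-3)/2} dt and μ_n(r) = (1/ω_0)∫_r^1 (1-t²)^{(n-3)/2} dt, where ω_0 = ∫_{-1}^1 (1-t²)^{(n-3)/2} dt. Then 1 ≥ μ(Str)/μ_n(r) ≥ 1 - (2(n-2)/(1-r)) · e^{-((n-3)/2)·log((1-r²)/(1-R²))}. -/

import Mathlib

private lemma aux_alg (A B m u v q : ℝ) (hA : A ≠ 0) (hu : u ≠ 0) (hq : q ≠ 0) :
    2 * m / u * (B / A) * (A * (u * v) / (2 * q)) = B * (m * v / q) := by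
  field_simp

theorem strip_vs_cap_measure (n : ℕ) (hn : 3 ≤ n) (r R : ℝ) (hr0 : 0 ≤ r) (hrR : r < R)
    (hR1 : R < 1) :
    (∫ t in r..R, (1 - t ^ 2) ^ (((n : ℝ) - 3) / 2)) /
        (∫ t in r..1, (1 - t ^ 2) ^ (((n : ℝ) - 3) / 2)) ≤ 1 ∧
    1 - 2 * ((n : ℝ) - 2) / (1 - r) *
        Real.exp (-(((n : ℝ) - 3) / 2) * Real.log ((1 - r ^ 2) / (1 - R ^ 2))) ≤
      (∫ t in r..R, (1 - t ^ 2) ^ (((n : ℝ) - 3) / 2)) /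
        ∫ t in r..1, (1 - t ^ 2) ^ (((n : ℝ) - 3) / 2) := by
  have hn3 : (3 : ℝ) ≤ (n : ℝ) := by exact_mod_cast hn
  set p : ℝ := ((n : ℝ) - 3) / 2 with hp
  clear_value p
  have hp0 : 0 ≤ p := by rw [hp]; linarith
  have hR0 : 0 < R := lt_of_le_of_lt hr0 hrR
  have hr1 : r < 1 := hrR.trans hR1
  have h1r2 : 0 < 1 - r ^ 2 := by nlinarith
  have h1R2 : 0 < 1 - R ^ 2 := by nlinarith
  have hcont : Continuous fun t : ℝ => (1 - t ^ 2) ^ p :=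
    (continuous_const.sub (continuous_pow 2)).rpow_const fun x => Or.inr hp0
  have hint : ∀ a b : ℝ, IntervalIntegrable (fun t => (1 - t ^ 2) ^ p)
      MeasureTheory.volume a b := fun a b => hcont.intervalIntegrable a b
  set I := ∫ t in r..R, (1 - t ^ 2) ^ p with hI
  set J := ∫ t in r..1, (1 - t ^ 2) ^ p with hJdef
  set K := ∫ t in R..1, (1 - t ^ 2) ^ p with hKdef
  clear_value I J K
  have hsplit : I + K = J := by
    rw [hI, hJdef, hKdef]
    exact intervalIntegral.integral_add_adjacent_intervals (hint r R) (hint R 1)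
  have hJpos : 0 < J := by
    rw [hJdef]
    apply intervalIntegral.intervalIntegral_pos_of_pos_on (hint r 1) _ hr1
    intro x hx
    exact Real.rpow_pos_of_pos (by nlinarith [hx.1, hx.2]) p
  have hKnonneg : 0 ≤ K := by
    rw [hKdef]
    apply intervalIntegral.integral_nonneg hR1.le
    intro u hu
    exact Real.rpow_nonneg (by nlinarith [hu.1, hu.2]) p
  have hBnn : (0 : ℝ) ≤ (1 - R ^ 2) ^ p := Real.rpow_nonneg h1R2.le p
  -- upper bound for K
  have hKle : K ≤ (1 - R ^ 2) ^ p := by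
    have h1 : K ≤ ∫ _t in R..1, (1 - R ^ 2) ^ p := by
      rw [hKdef]
      apply intervalIntegral.integral_mono_on hR1.le (hint R 1) intervalIntegrable_const
      intro x hx
      exact Real.rpow_le_rpow (by nlinarith [hx.1, hx.2]) (by nlinarith [hx.1, hx.2]) hp0
    have h2 : (∫ _t in R..1, (1 - R ^ 2) ^ p) = (1 - R) * (1 - R ^ 2) ^ p := by
      simp [intervalIntegral.integral_const]
    have h3 : (1 - R) * (1 - R ^ 2) ^ p ≤ 1 * (1 - R ^ 2) ^ p :=
      mul_le_mul_of_nonneg_right (by linarith) hBnn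
    rw [h2] at h1; linarith
  -- FTC lower bound for J
  have hq1 : (1 : ℝ) ≤ p + 1 := by linarith
  have hq0 : (0 : ℝ) < p + 1 := by linarith
  have hderiv : ∀ t : ℝ, HasDerivAt (fun s => -(1 - s ^ 2) ^ (p + 1) / (2 * (p + 1)))
      (t * (1 - t ^ 2) ^ p) t := by
    intro t
    have h1 : HasDerivAt (fun s : ℝ => 1 - s ^ 2) (-(2 * t)) t := by
      simpa using (hasDerivAt_pow 2 t).const_sub 1
    have h2 := (Real.hasDerivAt_rpow_const (x := 1 - t ^ 2) (p := p + 1) (Or.inr hq1)).comp t h1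
    have h3 := h2.neg.div_const (2 * (p + 1))
    simp only [add_sub_cancel_right, Function.comp] at h3
    refine h3.congr_deriv ?_
    rw [div_eq_iff (mul_pos two_pos hq0).ne']
    try ring
  have hFTC : (∫ t in r..1, t * (1 - t ^ 2) ^ p) = (1 - r ^ 2) ^ (p + 1) / (2 * (p + 1)) := by
    have hintc : IntervalIntegrable (fun t : ℝ => t * (1 - t ^ 2) ^ p)
        MeasureTheory.volume r 1 := (continuous_id.mul hcont).intervalIntegrable r 1
    rw [intervalIntegral.integral_eq_sub_of_hasDerivAt (fun t _ => hderiv t) hintc]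
    have h0 : ((1 : ℝ) - 1 ^ 2) ^ (p + 1) = 0 := by
      rw [show (1 : ℝ) - 1 ^ 2 = 0 by norm_num, Real.zero_rpow hq0.ne']
    rw [h0]
    ring
  have hJlb : (1 - r ^ 2) ^ (p + 1) / (2 * (p + 1)) ≤ J := by
    rw [← hFTC, hJdef]
    apply intervalIntegral.integral_mono_on hr1.le
      ((continuous_id.mul hcont).intervalIntegrable r 1) (hint r 1)
    intro x hx
    exact mul_le_of_le_one_left (Real.rpow_nonneg (by nlinarith [hx.1, hx.2]) p) hx.2
  have hrp1 : (1 - r ^ 2) ^ (p + 1) = (1 - r ^ 2) ^ p * ((1 - r) * (1 + r)) := by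
    rw [Real.rpow_add h1r2, Real.rpow_one]; ring
  -- the exponential term
  set C := 2 * ((n : ℝ) - 2) / (1 - r) *
      Real.exp (-p * Real.log ((1 - r ^ 2) / (1 - R ^ 2))) with hCdef
  have hA : (0 : ℝ) < (1 - r ^ 2) ^ p := Real.rpow_pos_of_pos h1r2 p
  have hE : Real.exp (-p * Real.log ((1 - r ^ 2) / (1 - R ^ 2))) =
      (1 - R ^ 2) ^ p / (1 - r ^ 2) ^ p := by
    rw [Real.log_div h1r2.ne' h1R2.ne', Real.rpow_def_of_pos h1R2, Real.rpow_def_of_pos h1r2,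
      ← Real.exp_sub]
    ring_nf
  have hCnn : 0 ≤ C := by
    rw [hCdef]
    apply mul_nonneg (div_nonneg (by linarith) (by linarith)) (Real.exp_pos _).le
  clear_value C
  have hKC : K ≤ C * J := by
    have hkey : C * ((1 - r ^ 2) ^ (p + 1) / (2 * (p + 1))) =
        (1 - R ^ 2) ^ p * (((n : ℝ) - 2) * (1 + r) / (p + 1)) := by
      rw [hCdef, hE, hrp1]
      exact aux_alg _ _ _ _ _ _ hA.ne' (by linarith) hq0.ne'
    have hfac : (1 : ℝ) ≤ ((n : ℝ) - 2) * (1 + r) / (p + 1) := by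
      rw [le_div_iff₀ hq0, hp]
      have h1 : (0:ℝ) ≤ ((n:ℝ) - 2) * r := mul_nonneg (by linarith) hr0
      linarith
    have h1 : (1 - R ^ 2) ^ p ≤ C * ((1 - r ^ 2) ^ (p + 1) / (2 * (p + 1))) := by
      rw [hkey]
      exact le_mul_of_one_le_right hBnn hfac
    have h2 : C * ((1 - r ^ 2) ^ (p + 1) / (2 * (p + 1))) ≤ C * J :=
      mul_le_mul_of_nonneg_left hJlb hCnn
    linarith
  have hIJ : I / J = 1 - K / J := by
    have hIJK : I = J - K := by linarith
    rw [hIJK, sub_div, div_self hJpos.ne']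
  have hKJnn : 0 ≤ K / J := div_nonneg hKnonneg hJpos.le
  have hKJC : K / J ≤ C := (div_le_iff₀ hJpos).2 (by linarith [hKC])
  constructor
  · rw [hIJ]; linarith
  · rw [hIJ]; linarith
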